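/- arXiv:1904.01549 — 9 statements merged into one kernel-verified Lean document; each statement's English description precedes it below -/
import Mathlib

section
/- Let f: L → M and g: M → N be homomorphisms of left S-semimodules with g injective and i-normal. If both f and g are i-normal, then g ∘ f is i-normal. -/
/-- An `S`-linear map `f : L → M` is `i`-normal if its image equals its
subtractive closure `{m ∈ M | m + f l = f l' for some l, l'}`. -/
def INormal {S L M : Type*} [Semiring S] [AddCommMonoid L] [AddCommMonoid M]
    [Module S L] [Module S M] (f : L →ₗ[S] M) : Prop :=
  ∀ m : M, (∃ l l' : L, m + f l = f l') → ∃ l : L, f l = m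

theorem inormal_comp_of_inormal
    {S L M N : Type*} [Semiring S]
    [AddCommMonoid L] [AddCommMonoid M] [AddCommMonoid N]
    [Module S L] [Module S M] [Module S N]
    (f : L →ₗ[S] M) (g : M →ₗ[S] N) (hg : Function.Injective g)
    (hf : INormal f) (hgn : INormal g) : INormal (g.comp f) := by
  rintro n ⟨l, l', h⟩
  obtain ⟨m, hm⟩ := hgn n ⟨f l, f l', h⟩
  have : m + f l = f l' := by
    apply hg
    simpa [map_add, hm] using h
  obtain ⟨l₀, hl₀⟩ := hf m ⟨l, l', this⟩
  exact ⟨l₀, by simp [hl₀, hm]⟩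
end

section
/- Let f: L → M and g: M → N be homomorphisms of left S-semimodules with f surjective and k-normal. If both f and g are k-normal, then g ∘ f is k-normal. -/
/-- An `S`-linear map `g` is `k`-normal if whenever `g m₁ = g m₂` there exist
`k₁, k₂ ∈ Ker g` with `m₁ + k₁ = m₂ + k₂`. -/
def KNormal {S L M : Type*} [Semiring S] [AddCommMonoid L] [AddCommMonoid M]
    [Module S L] [Module S M] (f : L →ₗ[S] M) : Prop :=
  ∀ l₁ l₂ : L, f l₁ = f l₂ → ∃ k₁ k₂ : L, f k₁ = 0 ∧ f k₂ = 0 ∧ l₁ + k₁ = l₂ + k₂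

theorem knormal_comp_of_knormal
    {S L M N : Type*} [Semiring S]
    [AddCommMonoid L] [AddCommMonoid M] [AddCommMonoid N]
    [Module S L] [Module S M] [Module S N]
    (f : L →ₗ[S] M) (g : M →ₗ[S] N) (hf : Function.Surjective f)
    (hfk : KNormal f) (hgk : KNormal g) : KNormal (g.comp f) := by
  intro l₁ l₂ h
  obtain ⟨m₁, m₂, hm₁, hm₂, hm⟩ := hgk (f l₁) (f l₂) h
  obtain ⟨a, ha⟩ := hf m₁
  obtain ⟨b, hb⟩ := hf m₂
  have hfab : f (l₁ + a) = f (l₂ + b) := by simp [ha, hb, hm]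
  obtain ⟨p, q, hp, hq, hpq⟩ := hfk _ _ hfab
  refine ⟨a + p, b + q, ?_, ?_, ?_⟩
  · simp [LinearMap.comp_apply, ha, hp, hm₁]
  · simp [LinearMap.comp_apply, hb, hq, hm₂]
  · rw [← add_assoc, ← add_assoc, hpq]
end

section
/- Let S = M₂(ℝ≥0), the semiring of 2×2 matrices over the nonnegative reals. The left ideals E₁ = {[[a,0],[b,0]] : a,b ∈ ℝ≥0} and N = {[[a,c],[b,d]] : a ≤ c, b ≤ d} satisfy E₁ ∩ N = {0}, but the sum E₁ + N is not direct: there exist x₁, x₂ ∈ E₁ and y₁, y₂ ∈ N with x₁ + y₁ = x₂ + y₂ but (x₁, y₁) ≠ (x₂, y₂). -/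
open Matrix

/-- In `S = M₂(ℝ≥0)`, the left ideals `E₁ = {[[a,0],[b,0]]}` and
`N = {[[a,c],[b,d]] : a ≤ c, b ≤ d}` intersect trivially, yet their sum is
not direct: some element of `E₁ + N` has two distinct decompositions. -/
theorem inter_trivial_but_sum_not_direct :
    let Mat := Matrix (Fin 2) (Fin 2) NNReal
    let E₁ : Set Mat := {A | A 0 1 = 0 ∧ A 1 1 = 0}
    let N : Set Mat := {A | A 0 0 ≤ A 0 1 ∧ A 1 0 ≤ A 1 1}
    E₁ ∩ N = {0} ∧
      ∃ x₁ ∈ E₁, ∃ x₂ ∈ E₁, ∃ y₁ ∈ N, ∃ y₂ ∈ N,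
        x₁ + y₁ = x₂ + y₂ ∧ (x₁, y₁) ≠ (x₂, y₂) := by
  intro Mat E₁ N
  simp only [Mat, E₁, N] at *
  constructor
  · ext A
    simp only [Set.mem_inter_iff, Set.mem_setOf_eq, Set.mem_singleton_iff]
    constructor
    · rintro ⟨⟨h1, h2⟩, h3, h4⟩
      rw [h1] at h3; rw [h2] at h4
      have e3 := le_zero_iff.mp h3
      have e4 := le_zero_iff.mp h4
      funext i j
      fin_cases i <;> fin_cases j
      · exact e3
      · exact h1
      · exact e4
      · exact h2
    · rintro rfl
      refine ⟨⟨rfl, rfl⟩, le_refl _, le_refl _⟩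
  · refine ⟨!![1,0;0,0], ⟨rfl, rfl⟩, 0, ⟨rfl, rfl⟩, !![0,1;0,0], ⟨by norm_num, by norm_num⟩,
      !![1,1;0,0], ⟨by norm_num, by norm_num⟩, ?_, ?_⟩
    · ext i j; fin_cases i <;> fin_cases j <;> simp [Matrix.add_apply]
    · intro h
      have := congrArg (fun p => p.1 0 0) h
      simp [Matrix.zero_apply] at this
end

section
/- Let f: L → M and g: L → N be S-linear maps of left S-semimodules, and let (g', f', P) be a pushout of (f, g) in the category of left S-semimodules. If f is surjective, then f': N → P is surjective. -/
universe u

/-- `(g' , f' , P)` is a pushout of `(f : L → M, g : L → N)`: the square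
commutes and the universal property holds. -/
def IsPushout {S : Type u} [Semiring S] {L M N P : Type u}
    [AddCommMonoid L] [AddCommMonoid M] [AddCommMonoid N] [AddCommMonoid P]
    [Module S L] [Module S M] [Module S N] [Module S P]
    (f : L →ₗ[S] M) (g : L →ₗ[S] N) (g' : M →ₗ[S] P) (f' : N →ₗ[S] P) : Prop :=
  g'.comp f = f'.comp g ∧
    ∀ (Q : Type u) (_ : AddCommMonoid Q) (_ : Module S Q)
      (gs : M →ₗ[S] Q) (fs : N →ₗ[S] Q), gs.comp f = fs.comp g →
      ∃! φ : P →ₗ[S] Q, φ.comp g' = gs ∧ φ.comp f' = fs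

/-- If `f` is surjective, then the pushout map `f'` is surjective. -/
theorem pushout_surjective
    {S : Type u} [Semiring S] {L M N P : Type u}
    [AddCommMonoid L] [AddCommMonoid M] [AddCommMonoid N] [AddCommMonoid P]
    [Module S L] [Module S M] [Module S N] [Module S P]
    (f : L →ₗ[S] M) (g : L →ₗ[S] N) (g' : M →ₗ[S] P) (f' : N →ₗ[S] P)
    (hpo : IsPushout f g g' f')
    (hf : Function.Surjective f) : Function.Surjective f' := by
  obtain ⟨hcomm, huniv⟩ := hpo
  set R := LinearMap.range f' with hR
  have hg'mem : ∀ m : M, g' m ∈ R := by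
    intro m
    obtain ⟨l, rfl⟩ := hf m
    have : g' (f l) = f' (g l) := LinearMap.congr_fun hcomm l
    rw [this]
    exact LinearMap.mem_range_self f' (g l)
  set gs : M →ₗ[S] R := g'.codRestrict R hg'mem with hgs
  set fs : N →ₗ[S] R := f'.codRestrict R (fun n => LinearMap.mem_range_self f' n) with hfs
  have hcs : gs.comp f = fs.comp g := by
    ext l
    exact LinearMap.congr_fun hcomm l
  obtain ⟨φ, ⟨hφg, hφf⟩, -⟩ := huniv R _ _ gs fs hcs
  -- show R.subtype ∘ φ = id via uniqueness
  obtain ⟨ψ, -, hψuniq⟩ := huniv P _ _ g' f' hcomm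
  have h1 : R.subtype.comp φ = ψ := by
    apply hψuniq
    constructor
    · rw [LinearMap.comp_assoc, hφg]; ext m; rfl
    · rw [LinearMap.comp_assoc, hφf]; ext n; rfl
  have h2 : LinearMap.id = ψ := by
    apply hψuniq
    constructor <;> ext x <;> rfl
  have hid : R.subtype.comp φ = LinearMap.id := h1.trans h2.symm
  intro p
  have : (φ p : P) = p := LinearMap.congr_fun hid p
  obtain ⟨n, hn⟩ := (φ p).2
  exact ⟨n, hn.trans this⟩
end

section
/- Let f: L → M and g: L → N be S-linear maps of left S-semimodules with f injective and g a normal epimorphism (surjective and k-normal). If (g', f', P) is a pushout of (f, g), then f': N → P is injective. -/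
universe u

section aux
variable {S : Type u} [Semiring S] {L M N : Type u}
    [AddCommMonoid L] [AddCommMonoid M] [AddCommMonoid N]
    [Module S L] [Module S M] [Module S N]

/-- The additive congruence on `M` identifying `m₁` and `m₂` when they differ
by images of kernel elements of `g`. -/
def pcon (f : L →ₗ[S] M) (g : L →ₗ[S] N) : AddCon M where
  r m₁ m₂ := ∃ k₁ k₂ : L, g k₁ = 0 ∧ g k₂ = 0 ∧ m₁ + f k₁ = m₂ + f k₂
  iseqv := by
    refine ⟨fun m => ⟨0, 0, map_zero g, map_zero g, by simp⟩, ?_, ?_⟩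
    · rintro m₁ m₂ ⟨k₁, k₂, h₁, h₂, h⟩
      exact ⟨k₂, k₁, h₂, h₁, h.symm⟩
    · rintro m₁ m₂ m₃ ⟨k₁, k₂, h₁, h₂, h⟩ ⟨k₃, k₄, h₃, h₄, h'⟩
      refine ⟨k₁ + k₃, k₄ + k₂, by simp [h₁, h₃], by simp [h₂, h₄], ?_⟩
      calc m₁ + f (k₁ + k₃) = (m₁ + f k₁) + f k₃ := by rw [map_add, add_assoc]
        _ = (m₂ + f k₂) + f k₃ := by rw [h]
        _ = (m₂ + f k₃) + f k₂ := by rw [add_right_comm]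
        _ = (m₃ + f k₄) + f k₂ := by rw [h']
        _ = m₃ + f (k₄ + k₂) := by rw [map_add, add_assoc]
  add' := by
    rintro w x y z ⟨k₁, k₂, h₁, h₂, h⟩ ⟨k₃, k₄, h₃, h₄, h'⟩
    refine ⟨k₁ + k₃, k₂ + k₄, by simp [h₁, h₃], by simp [h₂, h₄], ?_⟩
    calc w + y + f (k₁ + k₃) = (w + f k₁) + (y + f k₃) := by
          rw [map_add, add_add_add_comm]
      _ = (x + f k₂) + (z + f k₄) := by rw [h, h']
      _ = x + z + f (k₂ + k₄) := by rw [map_add, add_add_add_comm]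

instance pconSMul (f : L →ₗ[S] M) (g : L →ₗ[S] N) : SMul S (pcon f g).Quotient :=
  ⟨fun s => Quotient.map' (s • ·) <| by
    rintro m₁ m₂ ⟨k₁, k₂, h₁, h₂, h⟩
    exact ⟨s • k₁, s • k₂, by simp [h₁], by simp [h₂], by
      rw [map_smul, map_smul, ← smul_add, ← smul_add, h]⟩⟩

instance pconModule (f : L →ₗ[S] M) (g : L →ₗ[S] N) : Module S (pcon f g).Quotient where
  one_smul := by rintro ⟨m⟩; exact congrArg _ (one_smul S m)
  mul_smul s t := by rintro ⟨m⟩; exact congrArg _ (mul_smul s t m)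
  smul_zero s := congrArg _ (smul_zero s)
  smul_add s := by rintro ⟨m⟩ ⟨m'⟩; exact congrArg _ (smul_add s m m')
  add_smul s t := by rintro ⟨m⟩; exact congrArg _ (add_smul s t m)
  zero_smul := by rintro ⟨m⟩; exact congrArg _ (zero_smul S m)

/-- The canonical projection `M → M/~` as a linear map. -/
def gsMap (f : L →ₗ[S] M) (g : L →ₗ[S] N) : M →ₗ[S] (pcon f g).Quotient where
  toFun m := m
  map_add' _ _ := rfl
  map_smul' _ _ := rfl

/-- The underlying function of the map `N → M/~`. -/
noncomputable def fsFun (f : L →ₗ[S] M) (g : L →ₗ[S] N)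
    (hgs : Function.Surjective g) (n : N) : (pcon f g).Quotient :=
  ((f (hgs n).choose : M) : (pcon f g).Quotient)

theorem fsFun_g (f : L →ₗ[S] M) (g : L →ₗ[S] N)
    (hgs : Function.Surjective g) (hgk : KNormal g) (l : L) :
    fsFun f g hgs (g l) = ((f l : M) : (pcon f g).Quotient) := by
  have hc : g (hgs (g l)).choose = g l := (hgs (g l)).choose_spec
  obtain ⟨k₁, k₂, h₁, h₂, h⟩ := hgk _ _ hc
  refine (AddCon.eq _).2 ⟨k₁, k₂, h₁, h₂, ?_⟩
  rw [← map_add, ← map_add, h]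

/-- The map `N → M/~` as a linear map. -/
noncomputable def fsMap (f : L →ₗ[S] M) (g : L →ₗ[S] N)
    (hgs : Function.Surjective g) (hgk : KNormal g) :
    N →ₗ[S] (pcon f g).Quotient where
  toFun := fsFun f g hgs
  map_add' n₁ n₂ := by
    obtain ⟨l₁, rfl⟩ := hgs n₁
    obtain ⟨l₂, rfl⟩ := hgs n₂
    rw [← map_add, fsFun_g f g hgs hgk, fsFun_g f g hgs hgk, fsFun_g f g hgs hgk,
      map_add]
    rfl
  map_smul' s n := by
    obtain ⟨l, rfl⟩ := hgs n
    show fsFun f g hgs (s • g l) = s • fsFun f g hgs (g l)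
    rw [← map_smul g, fsFun_g f g hgs hgk, fsFun_g f g hgs hgk, map_smul f]
    rfl

end aux

/-- If `f` is injective and `g` is a normal epimorphism, then the pushout map
`f'` is injective. -/
theorem pushout_injective
    {S : Type u} [Semiring S] {L M N P : Type u}
    [AddCommMonoid L] [AddCommMonoid M] [AddCommMonoid N] [AddCommMonoid P]
    [Module S L] [Module S M] [Module S N] [Module S P]
    (f : L →ₗ[S] M) (g : L →ₗ[S] N) (g' : M →ₗ[S] P) (f' : N →ₗ[S] P)
    (hpo : IsPushout f g g' f')
    (hf : Function.Injective f) (hgs : Function.Surjective g) (hgk : KNormal g) :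
    Function.Injective f' := by
  obtain ⟨hsq, huniv⟩ := hpo
  have hcomm : (gsMap f g).comp f = (fsMap f g hgs hgk).comp g := by
    ext l
    exact (fsFun_g f g hgs hgk l).symm
  obtain ⟨φ, ⟨hφg, hφf⟩, -⟩ :=
    huniv ((pcon f g).Quotient) inferInstance inferInstance
      (gsMap f g) (fsMap f g hgs hgk) hcomm
  intro n₁ n₂ hn
  have h1 : fsMap f g hgs hgk n₁ = fsMap f g hgs hgk n₂ := by
    rw [← hφf]
    simp only [LinearMap.comp_apply, hn]
  obtain ⟨l₁, rfl⟩ := hgs n₁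
  obtain ⟨l₂, rfl⟩ := hgs n₂
  have h2 : ((f l₁ : M) : (pcon f g).Quotient) = ((f l₂ : M) : (pcon f g).Quotient) := by
    rw [← fsFun_g f g hgs hgk, ← fsFun_g f g hgs hgk]
    exact h1
  obtain ⟨k₁, k₂, hk₁, hk₂, h⟩ := (AddCon.eq _).1 h2
  have he : l₁ + k₁ = l₂ + k₂ := hf (by rw [map_add, map_add]; exact h)
  calc g l₁ = g (l₁ + k₁) := by rw [map_add, hk₁, add_zero]
    _ = g (l₂ + k₂) := by rw [he]
    _ = g l₂ := by rw [map_add, hk₂, add_zero]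
end

section
/- Let f: L → M and g: L → N be S-linear maps of left S-semimodules with f a normal epimorphism (surjective and k-normal). If (g', f', P) is a pushout of (f, g), then f': N → P is a normal epimorphism; in fact P ≅ N/Ker(f'). -/
universe u

/-- The congruence on `N` induced by the kernel of `f'`:
`n ≈ n'` iff `n + k = n' + k'` for some `k, k' ∈ Ker f'`. -/
def kerSetoid {S N P : Type u} [Semiring S]
    [AddCommMonoid N] [AddCommMonoid P] [Module S N] [Module S P]
    (f' : N →ₗ[S] P) : Setoid N where
  r n n' := ∃ k, f' k = 0 ∧ ∃ k', f' k' = 0 ∧ n + k = n' + k'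
  iseqv := by
    constructor
    · intro n; exact ⟨0, map_zero _, 0, map_zero _, rfl⟩
    · rintro a b ⟨k, hk, k', hk', h⟩; exact ⟨k', hk', k, hk, h.symm⟩
    · rintro a b c ⟨k₁, h₁, k₁', h₁', e₁⟩ ⟨k₂, h₂, k₂', h₂', e₂⟩
      refine ⟨k₁ + k₂, by simp [h₁, h₂], k₂' + k₁', by simp [h₂', h₁'], ?_⟩
      calc a + (k₁ + k₂) = (a + k₁) + k₂ := by rw [add_assoc]
        _ = (b + k₁') + k₂ := by rw [e₁]
        _ = (b + k₂) + k₁' := by rw [add_right_comm]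
        _ = (c + k₂') + k₁' := by rw [e₂]
        _ = c + (k₂' + k₁') := by rw [add_assoc]

section PushAux

variable {S : Type u} [Semiring S] {L M N : Type u}
    [AddCommMonoid L] [AddCommMonoid M] [AddCommMonoid N]
    [Module S L] [Module S M] [Module S N]

/-- The congruence on `N` generated by `g (Ker f)`. -/
def pushSetoid (f : L →ₗ[S] M) (g : L →ₗ[S] N) : Setoid N where
  r n n' := ∃ l₁, f l₁ = 0 ∧ ∃ l₂, f l₂ = 0 ∧ n + g l₁ = n' + g l₂
  iseqv := by
    constructor
    · intro n; exact ⟨0, map_zero _, 0, map_zero _, rfl⟩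
    · rintro a b ⟨l₁, h₁, l₂, h₂, e⟩; exact ⟨l₂, h₂, l₁, h₁, e.symm⟩
    · rintro a b c ⟨l₁, h₁, l₂, h₂, e₁⟩ ⟨l₃, h₃, l₄, h₄, e₂⟩
      refine ⟨l₁ + l₃, by simp [h₁, h₃], l₄ + l₂, by simp [h₄, h₂], ?_⟩
      simp only [map_add]
      calc a + (g l₁ + g l₃) = (a + g l₁) + g l₃ := by rw [add_assoc]
        _ = (b + g l₂) + g l₃ := by rw [e₁]
        _ = (b + g l₃) + g l₂ := by rw [add_right_comm]
        _ = (c + g l₄) + g l₂ := by rw [e₂]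
        _ = c + (g l₄ + g l₂) := by rw [add_assoc]

variable (f : L →ₗ[S] M) (g : L →ₗ[S] N)

instance pushZero : Zero (Quotient (pushSetoid f g)) := ⟨Quotient.mk _ 0⟩

instance pushAddOp : Add (Quotient (pushSetoid f g)) :=
  ⟨Quotient.map₂ (· + ·) (by
    rintro a a' ⟨l₁, h₁, l₂, h₂, e₁⟩ b b' ⟨l₃, h₃, l₄, h₄, e₂⟩
    refine ⟨l₁ + l₃, by simp [h₁, h₃], l₂ + l₄, by simp [h₂, h₄], ?_⟩
    simp only [map_add]
    rw [add_add_add_comm, e₁, e₂, add_add_add_comm])⟩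

instance pushSMul : SMul S (Quotient (pushSetoid f g)) :=
  ⟨fun s => Quotient.map (s • ·) (by
    rintro a b ⟨l₁, h₁, l₂, h₂, e⟩
    refine ⟨s • l₁, by simp [h₁], s • l₂, by simp [h₂], ?_⟩
    simp only [map_smul, ← smul_add, e])⟩

instance pushAdd : AddCommMonoid (Quotient (pushSetoid f g)) where
  add_assoc := by
    rintro ⟨a⟩ ⟨b⟩ ⟨c⟩
    exact congrArg (Quotient.mk _) (add_assoc a b c)
  zero_add := by rintro ⟨a⟩; exact congrArg (Quotient.mk _) (zero_add a)
  add_zero := by rintro ⟨a⟩; exact congrArg (Quotient.mk _) (add_zero a)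
  add_comm := by rintro ⟨a⟩ ⟨b⟩; exact congrArg (Quotient.mk _) (add_comm a b)
  nsmul := nsmulRec

instance pushModule : Module S (Quotient (pushSetoid f g)) where
  one_smul := by rintro ⟨a⟩; exact congrArg (Quotient.mk _) (one_smul S a)
  mul_smul := by rintro x y ⟨a⟩; exact congrArg (Quotient.mk _) (mul_smul x y a)
  smul_zero := by intro s; exact congrArg (Quotient.mk _) (smul_zero s)
  smul_add := by rintro s ⟨a⟩ ⟨b⟩; exact congrArg (Quotient.mk _) (smul_add s a b)
  add_smul := by rintro x y ⟨a⟩; exact congrArg (Quotient.mk _) (add_smul x y a)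
  zero_smul := by rintro ⟨a⟩; exact congrArg (Quotient.mk _) (zero_smul S a)

/-- Projection `N → N/g(Ker f)` as a linear map. -/
def qmap : N →ₗ[S] Quotient (pushSetoid f g) where
  toFun := Quotient.mk _
  map_add' _ _ := rfl
  map_smul' _ _ := rfl

end PushAux

section PushAux2

variable {S : Type u} [Semiring S] {L M N : Type u}
    [AddCommMonoid L] [AddCommMonoid M] [AddCommMonoid N]
    [Module S L] [Module S M] [Module S N]
    (f : L →ₗ[S] M) (g : L →ₗ[S] N)

theorem qmap_g_eq (hfk : KNormal f) {l l' : L} (h : f l = f l') :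
    qmap f g (g l) = qmap f g (g l') := by
  obtain ⟨k₁, k₂, hk₁, hk₂, e⟩ := hfk l l' h
  exact Quotient.sound ⟨k₁, hk₁, k₂, hk₂, by rw [← map_add, ← map_add, e]⟩

/-- The map `M → N/g(Ker f)` obtained from a section of `f`. -/
noncomputable def hmap (hfs : Function.Surjective f) (hfk : KNormal f) :
    M →ₗ[S] Quotient (pushSetoid f g) where
  toFun m := qmap f g (g (Function.surjInv hfs m))
  map_add' m m' := by
    rw [qmap_g_eq f g hfk
      (l' := Function.surjInv hfs m + Function.surjInv hfs m')
      (by simp [map_add, Function.surjInv_eq])]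
    exact congrArg (Quotient.mk _) (map_add g _ _)
  map_smul' s m := by
    rw [qmap_g_eq f g hfk (l' := s • Function.surjInv hfs m)
      (by simp [map_smul, Function.surjInv_eq])]
    exact congrArg (Quotient.mk _) (map_smul g s _)

theorem hmap_comp (hfs : Function.Surjective f) (hfk : KNormal f) :
    (hmap f g hfs hfk).comp f = (qmap f g).comp g := by
  ext l
  exact qmap_g_eq f g hfk (Function.surjInv_eq hfs (f l))

end PushAux2

private theorem addAux {A : Type u} [AddCommMonoid A] {a b k k' x x' y y' : A}
    (h : a + k = b + k') (h1 : k + x = y) (h2 : k' + x' = y') :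
    a + (y + x') = b + (y' + x) := by
  rw [← h1, ← h2]
  rw [show a + (k + x + x') = a + k + (x + x') from by abel, h]
  abel


/-- If `f` is a normal epimorphism, then the pushout map `f'` is a normal
epimorphism; in fact `P ≅ N / Ker f'`. -/
theorem pushout_normal_epi
    {S : Type u} [Semiring S] {L M N P : Type u}
    [AddCommMonoid L] [AddCommMonoid M] [AddCommMonoid N] [AddCommMonoid P]
    [Module S L] [Module S M] [Module S N] [Module S P]
    (f : L →ₗ[S] M) (g : L →ₗ[S] N) (g' : M →ₗ[S] P) (f' : N →ₗ[S] P)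
    (hpo : IsPushout f g g' f')
    (hfs : Function.Surjective f) (hfk : KNormal f) :
    Function.Surjective f' ∧ KNormal f' ∧
      ∃ e : P ≃ Quotient (kerSetoid f'),
        ∀ n : N, e (f' n) = Quotient.mk (kerSetoid f') n := by
  obtain ⟨hsq, hump⟩ := hpo
  have hsq' : ∀ l, f' (g l) = g' (f l) := fun l => (LinearMap.congr_fun hsq l).symm
  have hψwd : ∀ n n', (pushSetoid f g).r n n' → f' n = f' n' := by
    rintro n n' ⟨l₁, h₁, l₂, h₂, e⟩
    have h := congrArg f' e
    simpa [map_add, hsq', h₁, h₂] using h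
  let ψ : Quotient (pushSetoid f g) →ₗ[S] P :=
    { toFun := Quotient.lift f' hψwd
      map_add' := by rintro ⟨a⟩ ⟨b⟩; exact map_add f' a b
      map_smul' := by rintro s ⟨a⟩; exact map_smul f' s a }
  obtain ⟨φ, ⟨hφ1, hφ2⟩, -⟩ := hump (Quotient (pushSetoid f g)) _ _
    (hmap f g hfs hfk) (qmap f g) (hmap_comp f g hfs hfk)
  have hφ2' : ∀ n, φ (f' n) = Quotient.mk (pushSetoid f g) n :=
    fun n => LinearMap.congr_fun hφ2 n
  have hφ1' : ∀ m, φ (g' m) = hmap f g hfs hfk m :=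
    fun m => LinearMap.congr_fun hφ1 m
  have hφψ : ∀ q, φ (ψ q) = q := by rintro ⟨n⟩; exact hφ2' n
  have hψφ : ∀ p, ψ (φ p) = p := by
    obtain ⟨χ, -, hu⟩ := hump P _ _ g' f' hsq
    have h1 : ψ.comp φ = χ := by
      refine hu _ ⟨?_, ?_⟩
      · ext m
        show ψ (φ (g' m)) = g' m
        rw [hφ1']
        show f' (g (Function.surjInv hfs m)) = g' m
        rw [hsq', Function.surjInv_eq hfs m]
      · ext n
        show ψ (φ (f' n)) = f' n
        rw [hφ2']
        rfl
    have h2 : LinearMap.id (R := S) (M := P) = χ := by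
      refine hu _ ⟨?_, ?_⟩ <;> ext x <;> rfl
    intro p
    exact LinearMap.congr_fun (h1.trans h2.symm) p
  have hker : ∀ k, f' k = 0 → (pushSetoid f g).r k 0 := by
    intro k hk
    have h1 := hφ2' k
    rw [hk] at h1
    have h0 := hφ2' 0
    rw [map_zero] at h0
    exact Quotient.exact (h1.symm.trans h0)
  have hiff : ∀ n n', (pushSetoid f g).r n n' ↔ (kerSetoid f').r n n' := by
    intro n n'
    constructor
    · rintro ⟨l₁, h₁, l₂, h₂, e⟩
      exact ⟨g l₁, by rw [hsq', h₁, map_zero], g l₂, by rw [hsq', h₂, map_zero], e⟩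
    · rintro ⟨k, hk, k', hk', e⟩
      obtain ⟨a, ha, b, hb, eab⟩ := hker k hk
      obtain ⟨c, hc, d, hd, ecd⟩ := hker k' hk'
      rw [zero_add] at eab ecd
      refine ⟨b + c, by simp [hb, hc], d + a, by simp [hd, ha], ?_⟩
      simp only [map_add]
      exact addAux e eab ecd
  refine ⟨?_, ?_, ?_⟩
  · intro p
    obtain ⟨n, hn⟩ := Quotient.exists_rep (φ p)
    refine ⟨n, ?_⟩
    have : f' n = ψ (Quotient.mk (pushSetoid f g) n) := rfl
    rw [this, hn, hψφ]
  · intro n n' h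
    have hq : Quotient.mk (pushSetoid f g) n = Quotient.mk (pushSetoid f g) n' := by
      rw [← hφ2', ← hφ2', h]
    obtain ⟨l₁, h₁, l₂, h₂, e⟩ := Quotient.exact hq
    exact ⟨g l₁, g l₂, by rw [hsq', h₁, map_zero], by rw [hsq', h₂, map_zero], e⟩
  · refine ⟨Equiv.trans ⟨fun p => φ p, fun q => ψ q, hψφ, hφψ⟩
      (Quotient.congrRight hiff), fun n => ?_⟩
    show Quotient.congrRight hiff (φ (f' n)) = _
    rw [hφ2']
    rfl
end

section
/- Every projective left S-semimodule is e-projective: if P is a retract of a free left S-semimodule, then for every normal epimorphism g: M → N of left S-semimodules, the induced map Hom_S(P, M) → Hom_S(P, N), β ↦ g ∘ β, is a surjective k-normal monoid homomorphism. -/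
universe u

/-- Every projective left `S`-semimodule is `e`-projective: if `P` is a retract
of a free semimodule `S^(Λ)`, then for every normal epimorphism `g : M → N` the
induced map `Hom(P,M) → Hom(P,N)`, `β ↦ g ∘ β`, is surjective and `k`-normal. -/
theorem projective_implies_e_projective
    {S : Type u} [Semiring S] {P M N : Type u}
    [AddCommMonoid P] [AddCommMonoid M] [AddCommMonoid N]
    [Module S P] [Module S M] [Module S N]
    (Λ : Type u) (θ : (Λ →₀ S) →ₗ[S] P) (ψ : P →ₗ[S] (Λ →₀ S))
    (hret : θ.comp ψ = LinearMap.id)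
    (g : M →ₗ[S] N) (hgs : Function.Surjective g) (hgk : KNormal g) :
    Function.Surjective (fun β : P →ₗ[S] M => g.comp β) ∧
      ∀ β β' : P →ₗ[S] M, g.comp β = g.comp β' →
        ∃ u u' : P →ₗ[S] M, g.comp u = 0 ∧ g.comp u' = 0 ∧ β + u = β' + u' := by
  constructor
  · intro γ
    choose m hm using fun lam => hgs (γ (θ (Finsupp.single lam 1)))
    set ℓ : (Λ →₀ S) →ₗ[S] M :=
      Finsupp.linearCombination S m with hℓ
    have h1 : g.comp ℓ = γ.comp θ := by
      apply Finsupp.lhom_ext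
      intro a b
      have hs : Finsupp.single a b = b • Finsupp.single a (1 : S) := by
        rw [Finsupp.smul_single, smul_eq_mul, mul_one]
      rw [hs, map_smul, map_smul]
      simp only [LinearMap.comp_apply, map_smul, hℓ, Finsupp.linearCombination_single,
        one_smul, hm a]
    refine ⟨ℓ.comp ψ, ?_⟩
    calc g.comp (ℓ.comp ψ) = (g.comp ℓ).comp ψ := by rw [LinearMap.comp_assoc]
      _ = (γ.comp θ).comp ψ := by rw [h1]
      _ = γ.comp (θ.comp ψ) := by rw [LinearMap.comp_assoc]
      _ = γ := by rw [hret, LinearMap.comp_id]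
  · intro β β' h
    choose k₁ k₂ hk₁ hk₂ hsum using fun lam =>
      hgk (β (θ (Finsupp.single lam 1))) (β' (θ (Finsupp.single lam 1)))
        (by simpa using congrArg (fun f : P →ₗ[S] N => f (θ (Finsupp.single lam 1))) h)
    set K₁ : (Λ →₀ S) →ₗ[S] M :=
      Finsupp.linearCombination S k₁ with hK₁
    set K₂ : (Λ →₀ S) →ₗ[S] M :=
      Finsupp.linearCombination S k₂ with hK₂
    have hg1 : g.comp K₁ = 0 := by
      apply Finsupp.lhom_ext
      intro a b
      simp [hK₁, hk₁ a]
    have hg2 : g.comp K₂ = 0 := by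
      apply Finsupp.lhom_ext
      intro a b
      simp [hK₂, hk₂ a]
    have key : β.comp θ + K₁ = β'.comp θ + K₂ := by
      apply Finsupp.lhom_ext
      intro a b
      have hs : Finsupp.single a b = b • Finsupp.single a (1 : S) := by
        rw [Finsupp.smul_single, smul_eq_mul, mul_one]
      rw [hs]
      simp only [LinearMap.add_apply, LinearMap.comp_apply, map_smul, hK₁, hK₂,
        Finsupp.linearCombination_single, one_smul, ← smul_add]
      rw [hsum a]
    refine ⟨K₁.comp ψ, K₂.comp ψ, ?_, ?_, ?_⟩
    · rw [← LinearMap.comp_assoc, hg1, LinearMap.zero_comp]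
    · rw [← LinearMap.comp_assoc, hg2, LinearMap.zero_comp]
    · have : (β.comp θ + K₁).comp ψ = (β'.comp θ + K₂).comp ψ := by rw [key]
      simpa [LinearMap.add_comp, LinearMap.comp_assoc, hret, LinearMap.comp_id] using this
end

section
/- Let S = ℚ≥0 and let 𝔹 = {0, 1} with 1 + 1 = 1 be the Boolean S-semimodule where s·1 = 1 for all s ≠ 0. Then 𝔹 is S-e-projective but not S-projective: (a) every S-linear map from 𝔹 to S is zero, so the identity map 𝔹 → 𝔹 cannot be lifted along the surjection f: S → 𝔹 sending nonzero elements to 1; (b) every normal epimorphism f: S → N with N ≠ 0 is an isomorphism, and Hom_S(𝔹, N) = 0 for such N, so 𝔹 is S-e-projective. -/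
/-- The Boolean semimodule `𝔹 = {0, 1}` with `1 + 1 = 1`. -/
inductive Bool2 : Type
  | zero : Bool2
  | one : Bool2
  deriving DecidableEq

instance : Zero Bool2 := ⟨Bool2.zero⟩

instance : Add Bool2 :=
  ⟨fun x y => match x, y with
    | Bool2.zero, b => b
    | Bool2.one, _ => Bool2.one⟩

instance : AddCommMonoid Bool2 where
  add_assoc a b c := by cases a <;> cases b <;> cases c <;> rfl
  zero_add a := rfl
  add_zero a := by cases a <;> rfl
  add_comm a b := by cases a <;> cases b <;> rfl
  nsmul := nsmulRec

/-- The action of `ℚ≥0`: `s • 1 = 1` iff `s ≠ 0`. -/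
instance : SMul ℚ≥0 Bool2 := ⟨fun s b => if s = 0 then Bool2.zero else b⟩

instance : Module ℚ≥0 Bool2 where
  one_smul b := by
    show (if (1 : ℚ≥0) = 0 then Bool2.zero else b) = b
    simp
  mul_smul x y b := by
    show (if x * y = 0 then Bool2.zero else b) =
      (if x = 0 then Bool2.zero else (if y = 0 then Bool2.zero else b))
    by_cases hx : x = 0 <;> by_cases hy : y = 0 <;> simp [hx, hy]
  smul_zero s := by
    show (if s = 0 then Bool2.zero else Bool2.zero) = (0 : Bool2)
    simp; rfl
  smul_add s a b := by
    show (if s = 0 then Bool2.zero else a + b) =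
      (if s = 0 then Bool2.zero else a) + (if s = 0 then Bool2.zero else b)
    by_cases hs : s = 0 <;> simp [hs] <;> rfl
  add_smul x y b := by
    show (if x + y = 0 then Bool2.zero else b) =
      (if x = 0 then Bool2.zero else b) + (if y = 0 then Bool2.zero else b)
    by_cases hx : x = 0 <;> by_cases hy : y = 0 <;> cases b <;>
      simp [hx, hy, add_eq_zero] <;> rfl
  zero_smul b := by
    show (if (0 : ℚ≥0) = 0 then Bool2.zero else b) = (0 : Bool2)
    simp; rfl

lemma hom_bool2_to_nnrat_zero (φ : Bool2 →ₗ[ℚ≥0] ℚ≥0) : φ = 0 := by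
  have h1 : φ Bool2.one = 0 := by
    have h : φ Bool2.one + φ Bool2.one = φ Bool2.one := by
      rw [← map_add]; rfl
    have h2 : φ Bool2.one + φ Bool2.one = φ Bool2.one + 0 := by
      rw [add_zero]; exact h
    exact add_left_cancel h2
  apply LinearMap.ext
  intro b
  cases b
  · exact map_zero φ
  · exact h1

lemma bij_of_normal {N : Type} [AddCommMonoid N] [Module ℚ≥0 N]
    (q : ℚ≥0 →ₗ[ℚ≥0] N) (hs : Function.Surjective q)
    (hnorm : ∀ x y : ℚ≥0, q x = q y →
      ∃ k₁ k₂ : ℚ≥0, q k₁ = 0 ∧ q k₂ = 0 ∧ x + k₁ = y + k₂)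
    (hn : ∃ n : N, n ≠ 0) : Function.Bijective q := by
  have hker : ∀ k : ℚ≥0, q k = 0 → k = 0 := by
    intro k hk
    by_contra hk0
    obtain ⟨n, hne⟩ := hn
    obtain ⟨s, hsn⟩ := hs n
    apply hne
    have : s = (s * k⁻¹) • k := by
      simp [smul_eq_mul, mul_assoc, inv_mul_cancel₀ hk0]
    rw [← hsn, this, map_smul, hk, smul_zero]
  constructor
  · intro x y hxy
    obtain ⟨k₁, k₂, h1, h2, h3⟩ := hnorm x y hxy
    rw [hker k₁ h1, hker k₂ h2, add_zero, add_zero] at h3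
    exact h3
  · exact hs

lemma hom_bool2_to_N_zero {N : Type} [AddCommMonoid N] [Module ℚ≥0 N]
    (q : ℚ≥0 →ₗ[ℚ≥0] N) (hs : Function.Surjective q)
    (hnorm : ∀ x y : ℚ≥0, q x = q y →
      ∃ k₁ k₂ : ℚ≥0, q k₁ = 0 ∧ q k₂ = 0 ∧ x + k₁ = y + k₂)
    (γ : Bool2 →ₗ[ℚ≥0] N) : γ = 0 := by
  by_cases hn : ∃ n : N, n ≠ 0
  · have hbij := bij_of_normal q hs hnorm hn
    let e := LinearEquiv.ofBijective q hbij
    have h0 : (e.symm.toLinearMap.comp γ : Bool2 →ₗ[ℚ≥0] ℚ≥0) = 0 :=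
      hom_bool2_to_nnrat_zero _
    ext b
    have : e.symm (γ b) = 0 := congrArg (fun ψ => ψ b) h0
    have := congrArg e this
    simpa [e] using this
  · push_neg at hn
    ext b
    simp [hn (γ b)]

/-- `𝔹` is `ℚ≥0`-`e`-projective but not `ℚ≥0`-projective:
(a1) every linear map `𝔹 → ℚ≥0` is zero; (a2) the identity of `𝔹` does not
lift along the surjection `f : ℚ≥0 → 𝔹` sending nonzero elements to `1`;
(b1) every normal epimorphism `q : ℚ≥0 → N` with `N ≠ 0` is an isomorphism;
(b2) for every normal epimorphism `q : ℚ≥0 → N` the induced map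
`Hom(𝔹, ℚ≥0) → Hom(𝔹, N)` is surjective and `k`-normal, i.e. `𝔹` is
`ℚ≥0`-`e`-projective. -/
theorem bool2_e_projective_not_projective
    (f : ℚ≥0 →ₗ[ℚ≥0] Bool2)
    (hf : ∀ s : ℚ≥0, f s = if s = 0 then Bool2.zero else Bool2.one) :
    (∀ φ : Bool2 →ₗ[ℚ≥0] ℚ≥0, φ = 0) ∧
    (¬ ∃ h : Bool2 →ₗ[ℚ≥0] ℚ≥0, f.comp h = LinearMap.id) ∧
    (∀ (N : Type) (_ : AddCommMonoid N) (_ : Module ℚ≥0 N)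
        (q : ℚ≥0 →ₗ[ℚ≥0] N), Function.Surjective q →
        (∀ x y : ℚ≥0, q x = q y →
          ∃ k₁ k₂ : ℚ≥0, q k₁ = 0 ∧ q k₂ = 0 ∧ x + k₁ = y + k₂) →
        (∃ n : N, n ≠ 0) → Function.Bijective q) ∧
    (∀ (N : Type) (_ : AddCommMonoid N) (_ : Module ℚ≥0 N)
        (q : ℚ≥0 →ₗ[ℚ≥0] N), Function.Surjective q →
        (∀ x y : ℚ≥0, q x = q y →
          ∃ k₁ k₂ : ℚ≥0, q k₁ = 0 ∧ q k₂ = 0 ∧ x + k₁ = y + k₂) →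
        (Function.Surjective (fun β : Bool2 →ₗ[ℚ≥0] ℚ≥0 => q.comp β) ∧
          ∀ β β' : Bool2 →ₗ[ℚ≥0] ℚ≥0, q.comp β = q.comp β' →
            ∃ u u' : Bool2 →ₗ[ℚ≥0] ℚ≥0,
              q.comp u = 0 ∧ q.comp u' = 0 ∧ β + u = β' + u')) := by
  
  refine ⟨hom_bool2_to_nnrat_zero, ?_, fun N _ _ q hs hnorm hn => bij_of_normal q hs hnorm hn, ?_⟩
  · rintro ⟨h, hcomp⟩
    have h0 : h = 0 := hom_bool2_to_nnrat_zero h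
    have := congrArg (fun ψ : Bool2 →ₗ[ℚ≥0] Bool2 => ψ Bool2.one) hcomp
    simp only [LinearMap.comp_apply, LinearMap.id_apply, h0,
      LinearMap.zero_apply] at this
    rw [hf 0] at this
    simp at this
  · intro N _ _ q hs hnorm
    constructor
    · intro γ
      exact ⟨0, by rw [hom_bool2_to_N_zero q hs hnorm γ]; ext b; simp⟩
    · intro β β' _
      exact ⟨0, 0, by ext b; simp, by ext b; simp,
        by rw [hom_bool2_to_nnrat_zero β, hom_bool2_to_nnrat_zero β']⟩
end

section
/- Let S = M₂(ℝ≥0) and N₁ = {[[a,a],[b,b]] : a, b ∈ ℝ≥0}, a subtractive left ideal of S. Then the quotient S/N₁ admits no S-linear section of the canonical projection π: S → S/N₁; i.e., there is no S-linear g: S/N₁ → S with π ∘ g = id. Consequently S/N₁ is not S-k-projective. -/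
open Matrix

/-- Let `S = M₂(ℝ≥0)` and `N₁ = {[[a,a],[b,b]]}`, a subtractive left ideal.
For any realization `π : S → Q` of the quotient `S/N₁` (i.e. `π` is surjective
and `π x = π y ↔ x + n = y + n'` for some `n, n' ∈ N₁`), there is no `S`-linear
section `g : Q → S` with `π ∘ g = id`.  Hence `S/N₁` is not `S`-`k`-projective. -/
theorem quotient_by_N1_has_no_section
    (Q : Type) [AddCommMonoid Q]
    [Module (Matrix (Fin 2) (Fin 2) NNReal) Q]
    (π : Matrix (Fin 2) (Fin 2) NNReal →ₗ[Matrix (Fin 2) (Fin 2) NNReal] Q)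
    (hsurj : Function.Surjective π)
    (hquot : ∀ x y : Matrix (Fin 2) (Fin 2) NNReal,
      π x = π y ↔ ∃ n : Matrix (Fin 2) (Fin 2) NNReal,
        (n 0 0 = n 0 1 ∧ n 1 0 = n 1 1) ∧
        ∃ n' : Matrix (Fin 2) (Fin 2) NNReal,
          (n' 0 0 = n' 0 1 ∧ n' 1 0 = n' 1 1) ∧ x + n = y + n') :
    ¬ ∃ g : Q →ₗ[Matrix (Fin 2) (Fin 2) NNReal] Matrix (Fin 2) (Fin 2) NNReal,
        π.comp g = LinearMap.id := by
  rintro ⟨g, hg⟩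
  have hgπ : ∀ q, π (g q) = q := fun q => congrArg (fun f => f q) hg
  set m : Matrix (Fin 2) (Fin 2) NNReal := g (π 1) with hm
  -- Step 1: m 0 0 = 1 + m 0 1
  have h1 : π m = π 1 := hgπ (π 1)
  obtain ⟨n, ⟨hn1, hn2⟩, n', ⟨hn'1, hn'2⟩, heq⟩ := (hquot m 1).mp h1
  have e00 : m 0 0 + n 0 0 = 1 + n' 0 0 := by
    have := congrFun (congrFun heq 0) 0
    simpa [Matrix.add_apply, Matrix.one_apply] using this
  have e01 : m 0 1 + n 0 0 = n' 0 0 := by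
    have := congrFun (congrFun heq 0) 1
    rw [Matrix.add_apply, Matrix.add_apply, ← hn1, ← hn'1, Matrix.one_apply] at this
    simpa using this
  have key : m 0 0 = 1 + m 0 1 := by
    have : m 0 0 + n 0 0 = (1 + m 0 1) + n 0 0 := by
      rw [e00, ← e01]; ring
    exact add_right_cancel this
  -- Step 2: u := [[1,1],[0,0]] satisfies u * m = 0
  set u : Matrix (Fin 2) (Fin 2) NNReal := !![1, 1; 0, 0] with hu
  have hπu : π u = π 0 := by
    rw [hquot]
    refine ⟨0, by simp, u, ⟨?_, ?_⟩, by simp⟩ <;> simp [hu]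
  have hum : u * m = 0 := by
    have h1 : u • π (1 : Matrix (Fin 2) (Fin 2) NNReal) = 0 := by
      rw [← _root_.map_smul, smul_eq_mul, mul_one, hπu, map_zero]
    calc u * m = u • g (π 1) := by rw [smul_eq_mul]
      _ = g (u • π 1) := (_root_.map_smul g u (π 1)).symm
      _ = g 0 := by rw [h1]
      _ = 0 := map_zero g
  have hent : m 0 0 + m 1 0 = 0 := by
    have := congrFun (congrFun hum 0) 0
    rw [Matrix.mul_apply, Fin.sum_univ_two] at this
    simpa [hu] using this
  have : m 0 0 = 0 := by
    exact le_antisymm (le_of_add_le_left hent.le) zero_le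
  rw [key] at this
  simpa using (add_eq_zero.mp this).1
end
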